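/- Let C be a finite quotienting lattice of languages over A and let L ∈ Pol(C), the polynomial closure of C. Then there exist natural numbers h, p ≥ 1 such that for all ℓ ≥ h and all words u, v, x, y with u ≤_C v: if x u^{pℓ+1} y ∈ L then x u^{pℓ} v u^{pℓ} y ∈ L. -/

import Mathlib

/-- The canonical preorder `≤_C` on words. -/
def leC {A : Type} (C : Set (Set (List A))) (u v : List A) : Prop :=
  ∀ L ∈ C, u ∈ L → v ∈ L

/-- `n`-th power of a word in the free monoid: `w^n`. -/
def wpow {A : Type} (w : List A) (n : ℕ) : List A :=
  (List.replicate n w).flatten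

/-- The polynomial closure of `C`: the smallest class containing `C` and closed under
union and marked concatenation. -/
inductive Pol {A : Type} (C : Set (Set (List A))) : Set (List A) → Prop
  | base (L : Set (List A)) (h : L ∈ C) : Pol C L
  | union (H L : Set (List A)) (hH : Pol C H) (hL : Pol C L) : Pol C (H ∪ L)
  | marked (H L : Set (List A)) (a : A) (hH : Pol C H) (hL : Pol C L) :
      Pol C {w : List A | ∃ u ∈ H, ∃ v ∈ L, w = u ++ a :: v}

/- ### auxiliary lemmas on `wpow` -/

lemma wpow_add {A : Type} (u : List A) (m n : ℕ) :
    wpow u (m + n) = wpow u m ++ wpow u n := by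
  unfold wpow; rw [List.replicate_add, List.flatten_append]

lemma wpow_one {A : Type} (u : List A) : wpow u 1 = u := by simp [wpow]

lemma wpow_succ {A : Type} (u : List A) (n : ℕ) :
    wpow u (n + 1) = u ++ wpow u n := by
  rw [add_comm, wpow_add, wpow_one]

section
variable {A : Type}

lemma cons_glue {u u₁ u₂ : List A} {a : A} (hu : u = u₁ ++ a :: u₂) (t : List A) :
    u₁ ++ a :: (u₂ ++ t) = u ++ t := by rw [hu]; simp [List.append_assoc]

lemma wpow_glue1 {u u₁ u₂ : List A} {a : A} (hu : u = u₁ ++ a :: u₂)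
    (P Q j : ℕ) (y : List A) :
    wpow u P ++ (wpow u Q ++ (u₁ ++ a :: (u₂ ++ (wpow u j ++ y)))) =
      wpow u (P + Q + 1 + j) ++ y := by
  rw [cons_glue hu]
  have e : u ++ (wpow u j ++ y) = wpow u (1 + j) ++ y := by
    rw [add_comm, wpow_succ, List.append_assoc]
  rw [e, ← List.append_assoc, ← List.append_assoc, ← wpow_add u P Q,
      ← wpow_add u (P + Q) (1 + j)]
  rw [show P + Q + (1 + j) = P + Q + 1 + j by omega]

lemma wpow_glue2 {u u₁ u₂ : List A} {a : A} (hu : u = u₁ ++ a :: u₂)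
    (i Q P : ℕ) (t : List A) :
    wpow u i ++ (u₁ ++ a :: (u₂ ++ (wpow u Q ++ (wpow u P ++ t)))) =
      wpow u (i + 1 + Q + P) ++ t := by
  rw [cons_glue hu]
  have e : u ++ (wpow u Q ++ (wpow u P ++ t)) = wpow u (1 + Q + P) ++ t := by
    rw [show (1 : ℕ) + Q + P = 1 + (Q + P) by omega, wpow_add u 1 (Q + P), wpow_one,
        wpow_add u Q P]
    simp [List.append_assoc]
  rw [e, ← List.append_assoc, ← wpow_add u i (1 + Q + P)]
  rw [show i + (1 + Q + P) = i + 1 + Q + P by omega]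

/- ### splitting lemmas -/

lemma split2 {x y w₁ w₂ : List A} {a : A} (h : x ++ y = w₁ ++ a :: w₂) :
    (∃ x₁ x₂, x = x₁ ++ a :: x₂ ∧ w₁ = x₁ ∧ w₂ = x₂ ++ y) ∨
    (∃ y₁ y₂, y = y₁ ++ a :: y₂ ∧ w₁ = x ++ y₁ ∧ w₂ = y₂) := by
  rcases List.append_eq_append_iff.1 h with ⟨t, ht1, ht2⟩ | ⟨t, ht1, ht2⟩
  · exact Or.inr ⟨t, w₂, ht2, ht1, rfl⟩
  · cases t with
    | nil =>
      simp at ht1 ht2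
      exact Or.inr ⟨[], w₂, by simp [ht2], by simp [ht1], rfl⟩
    | cons b t' =>
      have hb : b = a ∧ w₂ = t' ++ y := by
        have := ht2.symm
        simp only [List.cons_append] at this
        exact ⟨(List.cons_eq_cons.1 this).1, ((List.cons_eq_cons.1 this).2).symm⟩
      exact Or.inl ⟨w₁, t', by rw [ht1, hb.1], rfl, hb.2⟩

lemma split3 {x z y w₁ w₂ : List A} {a : A} (h : x ++ z ++ y = w₁ ++ a :: w₂) :
    (∃ x₁ x₂, x = x₁ ++ a :: x₂ ∧ w₁ = x₁ ∧ w₂ = x₂ ++ z ++ y) ∨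
    (∃ z₁ z₂, z = z₁ ++ a :: z₂ ∧ w₁ = x ++ z₁ ∧ w₂ = z₂ ++ y) ∨
    (∃ y₁ y₂, y = y₁ ++ a :: y₂ ∧ w₁ = x ++ z ++ y₁ ∧ w₂ = y₂) := by
  have h' : x ++ (z ++ y) = w₁ ++ a :: w₂ := by rw [← List.append_assoc]; exact h
  rcases split2 h' with ⟨x₁, x₂, hx, hw1, hw2⟩ | ⟨t₁, t₂, ht, hw1, hw2⟩
  · exact Or.inl ⟨x₁, x₂, hx, hw1, by rw [hw2, List.append_assoc]⟩
  · rcases split2 ht with ⟨z₁, z₂, hz, h1, h2⟩ | ⟨y₁, y₂, hy, h1, h2⟩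
    · exact Or.inr (Or.inl ⟨z₁, z₂, hz, by rw [hw1, h1], by rw [hw2, h2]⟩)
    · exact Or.inr (Or.inr ⟨y₁, y₂, hy, by rw [hw1, h1, List.append_assoc], by rw [hw2, h2]⟩)

lemma wpow_split {u z₁ z₂ : List A} {a : A} {n : ℕ} (h : wpow u n = z₁ ++ a :: z₂) :
    ∃ i j u₁ u₂, n = i + 1 + j ∧ u = u₁ ++ a :: u₂ ∧
      z₁ = wpow u i ++ u₁ ∧ z₂ = u₂ ++ wpow u j := by
  induction n generalizing z₁ z₂ with
  | zero =>
    exfalso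
    have : ([] : List A) = z₁ ++ a :: z₂ := h
    have := congrArg List.length this
    simp at this
  | succ n ih =>
    rw [wpow_succ] at h
    rcases split2 h with ⟨u₁, u₂, hu, h1, h2⟩ | ⟨t₁, t₂, ht, h1, h2⟩
    · exact ⟨0, n, u₁, u₂, by omega, hu, by simp [wpow, h1], h2⟩
    · obtain ⟨i, j, u₁, u₂, hn, hu, hz1, hz2⟩ := ih ht
      refine ⟨i + 1, j, u₁, u₂, by omega, hu, ?_, by rw [h2, hz2]⟩
      rw [h1, hz1, wpow_succ, List.append_assoc]

/- ### `leC` lemmas -/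

variable {C : Set (Set (List A))}

lemma leC_refl (u : List A) : leC C u u := fun _ _ h => h
lemma leC_trans {u v w : List A} (h1 : leC C u v) (h2 : leC C v w) : leC C u w :=
  fun L hL hu => h2 L hL (h1 L hL hu)

lemma leC_appendR (hql : ∀ L ∈ C, ∀ u : List A, {w : List A | u ++ w ∈ L} ∈ C)
    {v v' : List A} (w : List A) (h : leC C v v') : leC C (w ++ v) (w ++ v') := by
  intro L hL hm
  exact h _ (hql L hL w) hm

lemma leC_appendL (hqr : ∀ L ∈ C, ∀ u : List A, {w : List A | w ++ u ∈ L} ∈ C)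
    {u u' : List A} (w : List A) (h : leC C u u') : leC C (u ++ w) (u' ++ w) := by
  intro L hL hm
  exact h _ (hqr L hL w) hm

/-- Uniform "idempotent power". -/
lemma exists_period (hfin : C.Finite)
    (hqr : ∀ L ∈ C, ∀ u : List A, {w : List A | w ++ u ∈ L} ∈ C) :
    ∃ p : ℕ, 1 ≤ p ∧ ∀ (u : List A) (m n : ℕ), 1 ≤ m → 1 ≤ n →
      leC C (wpow u (p * m)) (wpow u (p * n)) := by
  classical
  set F := hfin.toFinset with hF
  set N := F.powerset.card with hN
  refine ⟨(N + 1).factorial, Nat.one_le_iff_ne_zero.2 (Nat.factorial_ne_zero _), ?_⟩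
  set p := (N + 1).factorial with hp
  have step1 : ∀ u : List A, ∃ i q : ℕ, 1 ≤ i ∧ i ≤ N + 1 ∧ 1 ≤ q ∧ q ≤ N + 1 ∧
      (leC C (wpow u i) (wpow u (i + q)) ∧ leC C (wpow u (i + q)) (wpow u i)) := by
    intro u
    have hcard : Fintype.card (↥F.powerset) < Fintype.card (Fin (N + 1 + 1)) := by
      simp only [Fintype.card_coe, Fintype.card_fin, hN]; omega
    obtain ⟨a, b, hab, hfab⟩ := Fintype.exists_ne_map_eq_of_card_lt
      (fun k : Fin (N + 1 + 1) =>
        (⟨F.filter (fun L => wpow u (k.1 + 1) ∈ L), Finset.mem_powerset.2 (Finset.filter_subset _ _)⟩ :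
          ↥F.powerset)) hcard
    have key : ∀ c d : Fin (N + 1 + 1), c < d →
        (F.filter (fun L => wpow u (c.1 + 1) ∈ L) = F.filter (fun L => wpow u (d.1 + 1) ∈ L)) →
        ∃ i q : ℕ, 1 ≤ i ∧ i ≤ N + 1 ∧ 1 ≤ q ∧ q ≤ N + 1 ∧
        (leC C (wpow u i) (wpow u (i + q)) ∧ leC C (wpow u (i + q)) (wpow u i)) := by
      intro c d hcd heq
      refine ⟨c.1 + 1, d.1 - c.1, by omega, by omega, by omega, by omega, ?_, ?_⟩
      · intro L hL hm
        have hLF : L ∈ F := by rw [hF]; exact hfin.mem_toFinset.2 hL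
        have h3 : L ∈ F.filter (fun L => wpow u (c.1 + 1) ∈ L) := Finset.mem_filter.2 ⟨hLF, hm⟩
        rw [heq] at h3
        have h2 := (Finset.mem_filter.1 h3).2
        have he : c.1 + 1 + (d.1 - c.1) = d.1 + 1 := by omega
        rw [he]; exact h2
      · intro L hL hm
        have hLF : L ∈ F := by rw [hF]; exact hfin.mem_toFinset.2 hL
        have he : c.1 + 1 + (d.1 - c.1) = d.1 + 1 := by omega
        rw [he] at hm
        have h3 : L ∈ F.filter (fun L => wpow u (d.1 + 1) ∈ L) := Finset.mem_filter.2 ⟨hLF, hm⟩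
        rw [← heq] at h3
        exact (Finset.mem_filter.1 h3).2
    rcases lt_or_gt_of_ne hab with h | h
    · exact key a b h (congrArg Subtype.val hfab)
    · exact key b a h (congrArg Subtype.val hfab.symm)
  intro u m n hm hn
  obtain ⟨i, q, hi1, hiN, hq1, hqN, hfwd, hbwd⟩ := step1 u
  have shift : ∀ k : ℕ, i ≤ k →
      leC C (wpow u k) (wpow u (k + q)) ∧ leC C (wpow u (k + q)) (wpow u k) := by
    intro k hk
    have h1 : wpow u k = wpow u i ++ wpow u (k - i) := by
      rw [← wpow_add]; congr 1; omega
    have h2 : wpow u (k + q) = wpow u (i + q) ++ wpow u (k - i) := by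
      rw [← wpow_add]; congr 1; omega
    rw [h1, h2]
    exact ⟨leC_appendL hqr _ hfwd, leC_appendL hqr _ hbwd⟩
  have iter : ∀ (t k : ℕ), i ≤ k →
      leC C (wpow u k) (wpow u (k + q * t)) ∧ leC C (wpow u (k + q * t)) (wpow u k) := by
    intro t
    induction t with
    | zero => intro k hk; simp [leC_refl]
    | succ t ih =>
      intro k hk
      obtain ⟨ih1, ih2⟩ := ih k hk
      obtain ⟨s1, s2⟩ := shift (k + q * t) (by omega)
      have he : k + q * t + q = k + q * (t + 1) := by ring
      rw [he] at s1 s2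
      exact ⟨leC_trans ih1 s1, leC_trans s2 ih2⟩
  have hip : i ≤ p := le_trans hiN (Nat.self_le_factorial (N + 1))
  have hqp : q ∣ p := Nat.dvd_factorial hq1 hqN
  rcases le_total m n with hmn | hmn
  · obtain ⟨c, hc⟩ := hqp
    have heq : p * n = p * m + q * (c * (n - m)) := by
      have h1 : m + (n - m) = n := by omega
      calc p * n = p * (m + (n - m)) := by rw [h1]
        _ = p * m + p * (n - m) := mul_add p m (n - m)
        _ = p * m + (q * c) * (n - m) := by rw [← hc]
        _ = p * m + q * (c * (n - m)) := by ring
    rw [heq]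
    exact (iter _ _ (le_trans hip (Nat.le_mul_of_pos_right p hm))).1
  · obtain ⟨c, hc⟩ := hqp
    have heq : p * m = p * n + q * (c * (m - n)) := by
      have h1 : n + (m - n) = m := by omega
      calc p * m = p * (n + (m - n)) := by rw [h1]
        _ = p * n + p * (m - n) := mul_add p n (m - n)
        _ = p * n + (q * c) * (m - n) := by rw [← hc]
        _ = p * n + q * (c * (m - n)) := by ring
    rw [heq]
    exact (iter _ _ (le_trans hip (Nat.le_mul_of_pos_right p hn))).2

/- ### the strengthened inductive statement -/

def GoodP (C : Set (Set (List A))) (L : Set (List A)) (h p : ℕ) : Prop :=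
  ∀ ℓ : ℕ, h ≤ ℓ → ∀ u v x y : List A, leC C u v →
    x ++ wpow u (p * ℓ + 1) ++ y ∈ L →
    ∀ r s : ℕ, ℓ ≤ r → ℓ ≤ s →
      x ++ wpow u (p * r) ++ v ++ wpow u (p * s) ++ y ∈ L

lemma goodP_mono {L : Set (List A)} {h p h' c : ℕ} (hp : 1 ≤ p) (hc : 1 ≤ c)
    (hh : h ≤ h') (G : GoodP C L h p) : GoodP C L h' (p * c) := by
  intro ℓ hℓ u v x y huv hmem r s hr hs
  have e : p * c * ℓ = p * (c * ℓ) := by ring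
  rw [e] at hmem
  have hcl : ℓ ≤ c * ℓ := Nat.le_mul_of_pos_left ℓ hc
  have := G (c * ℓ) (le_trans hh (le_trans hℓ hcl)) u v x y huv hmem
    (c * r) (c * s) (Nat.mul_le_mul_left c hr) (Nat.mul_le_mul_left c hs)
  have e1 : p * (c * r) = p * c * r := by ring
  have e2 : p * (c * s) = p * c * s := by ring
  rw [e1, e2] at this
  exact this

lemma goodP_base (hfin : C.Finite)
    (hql : ∀ L ∈ C, ∀ u : List A, {w : List A | u ++ w ∈ L} ∈ C)
    (hqr : ∀ L ∈ C, ∀ u : List A, {w : List A | w ++ u ∈ L} ∈ C)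
    {L : Set (List A)} (hL : L ∈ C) :
    ∃ p, 1 ≤ p ∧ GoodP C L 1 p := by
  obtain ⟨p, hp, per⟩ := exists_period hfin hqr
  refine ⟨p, hp, ?_⟩
  intro ℓ hℓ u v x y huv hmem r s hr hs
  have hK2 : {w : List A | x ++ (w ++ y) ∈ L} ∈ C := hqr _ (hql L hL x) y
  have hm2 : wpow u (p * ℓ + 1) ∈ {w : List A | x ++ (w ++ y) ∈ L} := by
    show x ++ (wpow u (p * ℓ + 1) ++ y) ∈ L
    rw [← List.append_assoc]; exact hmem
  have key : leC C (wpow u (p * ℓ + 1)) (wpow u (p * r) ++ (v ++ wpow u (p * s))) := by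
    have stepA : leC C (wpow u (p * ℓ) ++ u) (wpow u (p * (r + s)) ++ u) :=
      leC_appendL hqr u (per u ℓ (r + s) (le_trans hℓ le_rfl) (by omega))
    have eA : wpow u (p * ℓ + 1) = wpow u (p * ℓ) ++ u := by
      rw [wpow_add, wpow_one]
    have eB : wpow u (p * (r + s)) ++ u = wpow u (p * r) ++ (u ++ wpow u (p * s)) := by
      calc wpow u (p * (r + s)) ++ u = wpow u (p * (r + s)) ++ wpow u 1 := by rw [wpow_one]
        _ = wpow u (p * (r + s) + 1) := (wpow_add _ _ _).symm
        _ = wpow u (p * r + (p * s + 1)) := by congr 1; ring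
        _ = wpow u (p * r) ++ wpow u (p * s + 1) := wpow_add _ _ _
        _ = wpow u (p * r) ++ (u ++ wpow u (p * s)) := by rw [wpow_succ]
    have stepC : leC C (wpow u (p * r) ++ (u ++ wpow u (p * s)))
        (wpow u (p * r) ++ (v ++ wpow u (p * s))) :=
      leC_appendR hql _ (leC_appendL hqr _ huv)
    rw [eA]
    refine leC_trans stepA ?_
    rw [eB]
    exact stepC
  have h2 := key _ hK2 hm2
  show _ ∈ L
  have : x ++ ((wpow u (p * r) ++ (v ++ wpow u (p * s))) ++ y) ∈ L := h2
  simpa [List.append_assoc] using this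
end

theorem stmt_6 {A : Type} (C : Set (Set (List A)))
    (hfin : C.Finite)
    (hempty : (∅ : Set (List A)) ∈ C) (huniv : (Set.univ : Set (List A)) ∈ C)
    (hunion : ∀ K L : Set (List A), K ∈ C → L ∈ C → K ∪ L ∈ C)
    (hinter : ∀ K L : Set (List A), K ∈ C → L ∈ C → K ∩ L ∈ C)
    (hql : ∀ L ∈ C, ∀ u : List A, {w : List A | u ++ w ∈ L} ∈ C)
    (hqr : ∀ L ∈ C, ∀ u : List A, {w : List A | w ++ u ∈ L} ∈ C)
    (L : Set (List A)) (hL : Pol C L) :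
    ∃ h p : ℕ, 1 ≤ h ∧ 1 ≤ p ∧
      ∀ ℓ : ℕ, h ≤ ℓ → ∀ u v x y : List A, leC C u v →
        x ++ wpow u (p * ℓ + 1) ++ y ∈ L →
        x ++ wpow u (p * ℓ) ++ v ++ wpow u (p * ℓ) ++ y ∈ L := by
  suffices hGood : ∃ h p : ℕ, 1 ≤ h ∧ 1 ≤ p ∧ GoodP C L h p by
    obtain ⟨h, p, hh, hp, G⟩ := hGood
    exact ⟨h, p, hh, hp, fun ℓ hℓ u v x y huv hm =>
      G ℓ hℓ u v x y huv hm ℓ ℓ le_rfl le_rfl⟩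
  induction hL with
  | base L hLC =>
    obtain ⟨p, hp, G⟩ := goodP_base hfin hql hqr hLC
    exact ⟨1, p, le_rfl, hp, G⟩
  | union H K hH hK ihH ihK =>
    obtain ⟨h₁, p₁, hh₁, hp₁, G₁⟩ := ihH
    obtain ⟨h₂, p₂, hh₂, hp₂, G₂⟩ := ihK
    refine ⟨max h₁ h₂, p₁ * p₂, le_trans hh₁ (le_max_left _ _), Nat.mul_pos hp₁ hp₂, ?_⟩
    have G₁' : GoodP C H (max h₁ h₂) (p₁ * p₂) := goodP_mono hp₁ hp₂ (le_max_left _ _) G₁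
    have G₂' : GoodP C K (max h₁ h₂) (p₁ * p₂) := by
      rw [mul_comm]
      exact goodP_mono hp₂ hp₁ (le_max_right _ _) G₂
    intro ℓ hℓ u v x y huv hmem r s hr hs
    cases hmem with
    | inl hm => exact Or.inl (G₁' ℓ hℓ u v x y huv hm r s hr hs)
    | inr hm => exact Or.inr (G₂' ℓ hℓ u v x y huv hm r s hr hs)
  | marked H K a hH hK ihH ihK =>
    obtain ⟨h₁, p₁, hh₁, hp₁, G₁⟩ := ihH
    obtain ⟨h₂, p₂, hh₂, hp₂, G₂⟩ := ihK
    set p := p₁ * p₂ with hpdef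
    have hp : 1 ≤ p := Nat.mul_pos hp₁ hp₂
    refine ⟨2 * (h₁ + h₂) + 2, p, by omega, hp, ?_⟩
    intro ℓ hℓ u v x y huv hmem r s hr hs
    obtain ⟨w₁, hw₁, w₂, hw₂, heq⟩ := hmem
    rcases split3 heq with ⟨x₁, x₂, hx, hw1, hw2⟩ | ⟨z₁, z₂, hz, hw1, hw2⟩ |
      ⟨y₁, y₂, hy, hw1, hw2⟩
    · -- the marked letter is inside x
      rw [hw2] at hw₂
      have e : p * ℓ + 1 = p₂ * (p₁ * ℓ) + 1 := by rw [hpdef]; ring_nf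
      rw [e] at hw₂
      have hKres := G₂ (p₁ * ℓ) (le_trans (le_trans (by omega) hℓ)
          (Nat.le_mul_of_pos_left ℓ hp₁)) u v x₂ y huv hw₂
        (p₁ * r) (p₁ * s) (Nat.mul_le_mul_left p₁ hr) (Nat.mul_le_mul_left p₁ hs)
      have e1 : p₂ * (p₁ * r) = p * r := by rw [hpdef]; ring
      have e2 : p₂ * (p₁ * s) = p * s := by rw [hpdef]; ring
      rw [e1, e2] at hKres
      refine ⟨x₁, hw1 ▸ hw₁, _, hKres, ?_⟩
      rw [hx]
      simp [List.append_assoc]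
    · -- the marked letter is inside the power block
      obtain ⟨i, j, u₁, u₂, hn, hu, hz1, hz2⟩ := wpow_split hz
      have hij : i + j = p * ℓ := by omega
      have hple : p * (2 * (h₁ + h₂) + 2) ≤ p * ℓ := Nat.mul_le_mul_left p hℓ
      have hexp : p * (2 * (h₁ + h₂) + 2) = 2 * (p * h₁) + 2 * (p * h₂) + 2 * p := by ring
      rcases le_total j i with hji | hji
      · -- left block is long: insert inside H
        have hi : p * h₁ + 1 ≤ i := by omega
        have hi1 : 1 ≤ i := by omega
        set m := (i - 1) / p with hm
        set s₀ := (i - 1) % p with hs₀def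
        have hdm : p * m + s₀ = i - 1 := Nat.div_add_mod (i - 1) p
        have him : i = p * m + s₀ + 1 := by omega
        have hs₀ : s₀ < p := Nat.mod_lt _ (by omega)
        have hm1 : h₁ ≤ m := by
          have h1 : p * h₁ < p * (m + 1) := by
            have : p * (m + 1) = p * m + p := by ring
            omega
          exact Nat.lt_succ_iff.1 (Nat.lt_of_mul_lt_mul_left h1)
        have hmℓ : m ≤ ℓ := by
          have h1 : p * m < p * ℓ := by omega
          exact le_of_lt (Nat.lt_of_mul_lt_mul_left h1)
        obtain ⟨d, hd⟩ : ∃ d, s = ℓ + d := ⟨s - ℓ, by omega⟩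
        -- rewrite w₁ as an H-instance
        have hw₁H : x ++ wpow u (p₁ * (p₂ * m) + 1) ++ (wpow u s₀ ++ u₁) ∈ H := by
          have e1 : wpow u i = wpow u (p * m + 1) ++ wpow u s₀ := by
            rw [← wpow_add]; congr 1; omega
          have e2 : p₁ * (p₂ * m) = p * m := by rw [hpdef]; ring
          have : w₁ = x ++ wpow u (p₁ * (p₂ * m) + 1) ++ (wpow u s₀ ++ u₁) := by
            rw [hw1, hz1, e1, e2]
            simp [List.append_assoc]
          rw [← this]
          exact hw₁
        have hHres := G₁ (p₂ * m) (le_trans hm1 (Nat.le_mul_of_pos_left m hp₂))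
          u v x (wpow u s₀ ++ u₁) huv hw₁H (p₂ * r) (p₂ * (m + d))
          (Nat.mul_le_mul_left p₂ (le_trans hmℓ hr))
          (Nat.mul_le_mul_left p₂ (by omega))
        have e1 : p₁ * (p₂ * r) = p * r := by rw [hpdef]; ring
        have e2 : p₁ * (p₂ * (m + d)) = p * (m + d) := by rw [hpdef]; ring
        rw [e1, e2] at hHres
        refine ⟨_, hHres, w₂, hw₂, ?_⟩
        rw [hw2, hz2]
        have eglue := wpow_glue1 hu (p * (m + d)) s₀ j y
        have eexp : p * (m + d) + s₀ + 1 + j = p * s := by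
          have e3 : p * (m + d) = p * m + p * d := by ring
          have e4 : p * s = p * ℓ + p * d := by rw [hd]; ring
          omega
        rw [eexp] at eglue
        calc x ++ wpow u (p * r) ++ v ++ wpow u (p * s) ++ y
            = x ++ wpow u (p * r) ++ v ++ (wpow u (p * s) ++ y) := by
              simp [List.append_assoc]
          _ = x ++ wpow u (p * r) ++ v ++
              (wpow u (p * (m + d)) ++ (wpow u s₀ ++ (u₁ ++ a :: (u₂ ++ (wpow u j ++ y))))) := by
              rw [← eglue]
          _ = (x ++ wpow u (p * r) ++ v ++ wpow u (p * (m + d)) ++ (wpow u s₀ ++ u₁)) ++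
              a :: (u₂ ++ wpow u j ++ y) := by
              simp [List.append_assoc]
      · -- right block is long: insert inside K
        have hj : p * h₂ + 1 ≤ j := by omega
        have hj1 : 1 ≤ j := by omega
        set m := (j - 1) / p with hm
        set s₀ := (j - 1) % p with hs₀def
        have hdm : p * m + s₀ = j - 1 := Nat.div_add_mod (j - 1) p
        have hjm : j = p * m + s₀ + 1 := by omega
        have hs₀ : s₀ < p := Nat.mod_lt _ (by omega)
        have hm1 : h₂ ≤ m := by
          have h1 : p * h₂ < p * (m + 1) := by
            have : p * (m + 1) = p * m + p := by ring
            omega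
          exact Nat.lt_succ_iff.1 (Nat.lt_of_mul_lt_mul_left h1)
        have hmℓ : m ≤ ℓ := by
          have h1 : p * m < p * ℓ := by omega
          exact le_of_lt (Nat.lt_of_mul_lt_mul_left h1)
        obtain ⟨d, hd⟩ : ∃ d, r = ℓ + d := ⟨r - ℓ, by omega⟩
        -- rewrite w₂ as a K-instance
        have hw₂K : (u₂ ++ wpow u s₀) ++ wpow u (p₂ * (p₁ * m) + 1) ++ y ∈ K := by
          have e1 : wpow u j = wpow u s₀ ++ wpow u (p * m + 1) := by
            rw [← wpow_add]; congr 1; omega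
          have e2 : p₂ * (p₁ * m) = p * m := by rw [hpdef]; ring
          have : w₂ = (u₂ ++ wpow u s₀) ++ wpow u (p₂ * (p₁ * m) + 1) ++ y := by
            rw [hw2, hz2, e1, e2]
            simp [List.append_assoc]
          rw [← this]
          exact hw₂
        have hKres := G₂ (p₁ * m) (le_trans hm1 (Nat.le_mul_of_pos_left m hp₁))
          u v (u₂ ++ wpow u s₀) y huv hw₂K (p₁ * (m + d)) (p₁ * s)
          (Nat.mul_le_mul_left p₁ (by omega))
          (Nat.mul_le_mul_left p₁ (le_trans hmℓ hs))
        have e1 : p₂ * (p₁ * (m + d)) = p * (m + d) := by rw [hpdef]; ring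
        have e2 : p₂ * (p₁ * s) = p * s := by rw [hpdef]; ring
        rw [e1, e2] at hKres
        refine ⟨w₁, hw₁, _, hKres, ?_⟩
        rw [hw1, hz1]
        have eglue := wpow_glue2 hu i s₀ (p * (m + d))
          (v ++ (wpow u (p * s) ++ y))
        have eexp : i + 1 + s₀ + p * (m + d) = p * r := by
          have e3 : p * (m + d) = p * m + p * d := by ring
          have e4 : p * r = p * ℓ + p * d := by rw [hd]; ring
          omega
        rw [eexp] at eglue
        calc x ++ wpow u (p * r) ++ v ++ wpow u (p * s) ++ y
            = x ++ (wpow u (p * r) ++ (v ++ (wpow u (p * s) ++ y))) := by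
              simp [List.append_assoc]
          _ = x ++ (wpow u i ++ (u₁ ++ a :: (u₂ ++ (wpow u s₀ ++
              (wpow u (p * (m + d)) ++ (v ++ (wpow u (p * s) ++ y))))))) := by
              rw [← eglue]
          _ = (x ++ (wpow u i ++ u₁)) ++
              a :: (u₂ ++ wpow u s₀ ++ wpow u (p * (m + d)) ++ v ++ wpow u (p * s) ++ y) := by
              simp [List.append_assoc]
    · -- the marked letter is inside y
      rw [hw1] at hw₁
      have e : p * ℓ + 1 = p₁ * (p₂ * ℓ) + 1 := by rw [hpdef]; ring_nf
      rw [e] at hw₁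
      have hHres := G₁ (p₂ * ℓ) (le_trans (le_trans (by omega) hℓ)
          (Nat.le_mul_of_pos_left ℓ hp₂)) u v x y₁ huv hw₁
        (p₂ * r) (p₂ * s) (Nat.mul_le_mul_left p₂ hr) (Nat.mul_le_mul_left p₂ hs)
      have e1 : p₁ * (p₂ * r) = p * r := by rw [hpdef]; ring
      have e2 : p₁ * (p₂ * s) = p * s := by rw [hpdef]; ring
      rw [e1, e2] at hHres
      refine ⟨_, hHres, y₂, hw2 ▸ hw₂, ?_⟩
      rw [hy]
      simp [List.append_assoc]
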